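/- Let S be a nonempty finite set, T : S → S → ℝ a row-stochastic matrix with limiting matrix Π := lim_{t→∞} (1/t) Σ_{k=0}^{t-1} T^k, ι an initial probability distribution on S, and r : S → ℝ a reward vector. Then the long-run average expected reward exists and satisfies lim_{t→∞} (1/t) E_ι[ Σ_{k=0}^{t-1} r(X_k) ] = ι^T (Π r), where (X_t) is the Markov chain with initial distribution ι and transition matrix T. -/

import Mathlib

open Filter Topology MeasureTheory

/-- **Long-run average expected reward.**
Let `T` be row-stochastic with limiting matrix `P`, `ι` an initial probability distribution and
`r` a reward vector. If `μ` is the law of the Markov chain trajectory (the probability measure on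
`ℕ → S` assigning each cylinder set its path probability), then
`(1/t) E_ι[∑_{k<t} r(X_k)] → ι^T (P r)` as `t → ∞`. -/
theorem longrun_average_reward {S : Type*} [Fintype S] [Nonempty S] [DecidableEq S]
    [MeasurableSpace S] [MeasurableSingletonClass S]
    (T P : Matrix S S ℝ)
    (hnn : ∀ s s', 0 ≤ T s s') (hrow : ∀ s, ∑ s', T s s' = 1)
    (hP : ∀ s s' : S,
      Tendsto (fun t : ℕ => (t : ℝ)⁻¹ * ∑ k ∈ Finset.range t, (T ^ k) s s')
        atTop (nhds (P s s')))
    (ι : S → ℝ) (hιnn : ∀ s, 0 ≤ ι s) (hιsum : ∑ s, ι s = 1)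
    (r : S → ℝ)
    (μ : Measure (ℕ → S)) [IsProbabilityMeasure μ]
    (hμ : ∀ (n : ℕ) (s : ℕ → S),
      μ {ω | ∀ i ≤ n, ω i = s i}
        = ENNReal.ofReal (ι (s 0) * ∏ t ∈ Finset.range n, T (s t) (s (t + 1)))) :
    Tendsto
      (fun t : ℕ => (t : ℝ)⁻¹ * ∫ ω, (∑ k ∈ Finset.range t, r (ω k)) ∂μ)
      atTop (nhds (∑ s, ι s * P.mulVec r s)) := by
  classical
  -- nonnegativity of entries of T ^ k
  have hTk : ∀ (k : ℕ) (s s' : S), 0 ≤ (T ^ k) s s' := by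
    intro k
    induction k with
    | zero =>
      intro s s'
      by_cases h : s = s' <;> simp [Matrix.one_apply, h]
    | succ k ih =>
      intro s s'
      rw [pow_succ]
      exact Finset.sum_nonneg fun x _ => mul_nonneg (ih s x) (hnn x s')
  have hvk : ∀ (k : ℕ) (s : S), 0 ≤ Matrix.vecMul ι (T ^ k) s := by
    intro k s
    exact Finset.sum_nonneg fun x _ => mul_nonneg (hιnn x) (hTk k x s)
  -- measurability of generalized cylinders
  have hmeasD : ∀ (k n : ℕ) (s : ℕ → S),
      MeasurableSet {ω : ℕ → S | ∀ i, k ≤ i → i ≤ n → ω i = s i} := by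
    intro k n s
    have hset : {ω : ℕ → S | ∀ i, k ≤ i → i ≤ n → ω i = s i}
        = ⋂ i ∈ Finset.Icc k n, (fun ω : ℕ → S => ω i) ⁻¹' {s i} := by
      ext ω
      simp [Finset.mem_Icc]
    rw [hset]
    exact MeasurableSet.biInter (Finset.Icc k n).countable_toSet
      (fun i _ => measurable_pi_apply i (measurableSet_singleton (s i)))
  -- measure of generalized cylinders
  have key : ∀ (k n : ℕ), k ≤ n → ∀ s : ℕ → S,
      μ {ω : ℕ → S | ∀ i, k ≤ i → i ≤ n → ω i = s i}
        = ENNReal.ofReal (Matrix.vecMul ι (T ^ k) (s k)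
            * ∏ t ∈ Finset.Ico k n, T (s t) (s (t + 1))) := by
    intro k
    induction k with
    | zero =>
      intro n _ s
      have hset : {ω : ℕ → S | ∀ i, 0 ≤ i → i ≤ n → ω i = s i}
          = {ω : ℕ → S | ∀ i ≤ n, ω i = s i} := by
        ext ω; simp
      rw [hset, hμ n s]
      congr 1
      · rw [pow_zero, Matrix.vecMul_one, Finset.range_eq_Ico]
    | succ k ih =>
      intro n hn s
      have hkn : k ≤ n := le_trans (Nat.le_succ k) hn
      have hkltn : k < n := hn
      -- partition over the value at time k
      have hset : {ω : ℕ → S | ∀ i, k + 1 ≤ i → i ≤ n → ω i = s i}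
          = ⋃ s' : S, {ω : ℕ → S | ∀ i, k ≤ i → i ≤ n → ω i = Function.update s k s' i} := by
        ext ω
        simp only [Set.mem_setOf_eq, Set.mem_iUnion]
        constructor
        · intro h
          refine ⟨ω k, fun i hki hin => ?_⟩
          rcases eq_or_lt_of_le hki with h1 | h1
          · rw [← h1, Function.update_self]
          · rw [Function.update_of_ne (by omega)]
            exact h i h1 hin
        · rintro ⟨s', hs'⟩ i hki hin
          have := hs' i (by omega) hin
          rwa [Function.update_of_ne (by omega)] at this
      have hdisj : Pairwise (Function.onFun Disjoint
          (fun s' : S => {ω : ℕ → S | ∀ i, k ≤ i → i ≤ n → ω i = Function.update s k s' i})) := by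
        intro a b hab
        refine Set.disjoint_left.2 fun ω ha hb => ?_
        have h1 := ha k le_rfl hkn
        have h2 := hb k le_rfl hkn
        rw [Function.update_self] at h1 h2
        exact hab (h1 ▸ h2)
      rw [hset, measure_iUnion hdisj (fun s' => hmeasD k n _), tsum_fintype]
      have hterm : ∀ s' : S,
          μ {ω : ℕ → S | ∀ i, k ≤ i → i ≤ n → ω i = Function.update s k s' i}
            = ENNReal.ofReal ((Matrix.vecMul ι (T ^ k) s' * T s' (s (k + 1)))
                * ∏ t ∈ Finset.Ico (k + 1) n, T (s t) (s (t + 1))) := by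
        intro s'
        rw [ih n hkn]
        congr 1
        rw [Function.update_self]
        rw [Finset.prod_eq_prod_Ico_succ_bot hkltn]
        have hprod : ∀ t ∈ Finset.Ico (k + 1) n,
            T (Function.update s k s' t) (Function.update s k s' (t + 1))
              = T (s t) (s (t + 1)) := by
          intro t ht
          rw [Finset.mem_Ico] at ht
          rw [Function.update_of_ne (by omega), Function.update_of_ne (by omega)]
        rw [Finset.prod_congr rfl hprod, Function.update_self,
          Function.update_of_ne (by omega)]
        ring
      simp_rw [hterm]
      rw [← ENNReal.ofReal_sum_of_nonneg (fun s' _ =>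
        mul_nonneg (mul_nonneg (hvk k s') (hnn s' (s (k + 1))))
          (Finset.prod_nonneg fun t _ => hnn _ _))]
      congr 1
      rw [← Finset.sum_mul]
      have hstep : ∑ s' : S, Matrix.vecMul ι (T ^ k) s' * T s' (s (k + 1))
          = Matrix.vecMul ι (T ^ (k + 1)) (s (k + 1)) := by
        rw [pow_succ, ← Matrix.vecMul_vecMul]
        simp [Matrix.vecMul, dotProduct]
      rw [hstep]
  -- marginal distribution at time k
  have marg : ∀ (k : ℕ) (s : S),
      μ {ω : ℕ → S | ω k = s} = ENNReal.ofReal (Matrix.vecMul ι (T ^ k) s) := by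
    intro k s
    have h := key k k le_rfl (fun _ => s)
    have hset : {ω : ℕ → S | ∀ i, k ≤ i → i ≤ k → ω i = (fun _ => s) i}
        = {ω : ℕ → S | ω k = s} := by
      ext ω
      simp only [Set.mem_setOf_eq]
      constructor
      · intro h'; exact h' k le_rfl le_rfl
      · intro h' i h1 h2
        have : i = k := le_antisymm h2 h1
        rw [this]; exact h'
    rw [hset] at h
    simpa using h
  have hmeas1 : ∀ (k : ℕ) (s : S), MeasurableSet {ω : ℕ → S | ω k = s} := by
    intro k s
    have hpre : {ω : ℕ → S | ω k = s} = (fun ω : ℕ → S => ω k) ⁻¹' {s} := rfl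
    rw [hpre]
    exact measurable_pi_apply k (measurableSet_singleton s)
  -- representation as indicators
  have hrep : ∀ (k : ℕ) (ω : ℕ → S),
      r (ω k) = ∑ s : S, Set.indicator {ω' : ℕ → S | ω' k = s} (fun _ => r s) ω := by
    intro k ω
    rw [Finset.sum_eq_single (ω k)]
    · rw [Set.indicator_of_mem (by exact rfl)]
    · intro b _ hb
      rw [Set.indicator_of_notMem]
      exact fun hmem => hb (hmem.symm)
    · intro h; exact absurd (Finset.mem_univ _) h
  have hintg : ∀ k : ℕ, Integrable (fun ω : ℕ → S => r (ω k)) μ := by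
    intro k
    have : Integrable (fun ω : ℕ → S =>
        ∑ s : S, Set.indicator {ω' : ℕ → S | ω' k = s} (fun _ => r s) ω) μ :=
      integrable_finset_sum _ fun s _ => (integrable_const (r s)).indicator (hmeas1 k s)
    exact this.congr (Filter.Eventually.of_forall fun ω => (hrep k ω).symm)
  have hint : ∀ k : ℕ,
      ∫ ω, r (ω k) ∂μ = ∑ s, Matrix.vecMul ι (T ^ k) s * r s := by
    intro k
    have h1 : ∫ ω, r (ω k) ∂μ
        = ∫ ω, ∑ s : S, Set.indicator {ω' : ℕ → S | ω' k = s} (fun _ => r s) ω ∂μ := by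
      exact integral_congr_ae (Filter.Eventually.of_forall fun ω => hrep k ω)
    rw [h1, integral_finset_sum _ fun s _ =>
      (integrable_const (r s)).indicator (hmeas1 k s)]
    refine Finset.sum_congr rfl fun s _ => ?_
    rw [integral_indicator_const (r s) (hmeas1 k s), measureReal_def, marg k s,
      ENNReal.toReal_ofReal (hvk k s), smul_eq_mul]
  -- the integral of the partial sums
  have hI : ∀ t : ℕ, ∫ ω, (∑ k ∈ Finset.range t, r (ω k)) ∂μ
      = ∑ k ∈ Finset.range t, ∑ s, Matrix.vecMul ι (T ^ k) s * r s := by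
    intro t
    rw [integral_finset_sum _ fun k _ => hintg k]
    exact Finset.sum_congr rfl fun k _ => hint k
  -- rewrite the prelimit expression
  have heq : ∀ t : ℕ, (t : ℝ)⁻¹ * ∫ ω, (∑ k ∈ Finset.range t, r (ω k)) ∂μ
      = ∑ s, ∑ s', (ι s * ((t : ℝ)⁻¹ * ∑ k ∈ Finset.range t, (T ^ k) s s')) * r s' := by
    intro t
    have tri : ∀ f : ℕ → S → S → ℝ,
        ∑ k ∈ Finset.range t, ∑ s : S, ∑ x : S, f k s x
          = ∑ x : S, ∑ s : S, ∑ k ∈ Finset.range t, f k s x := by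
      intro f
      calc ∑ k ∈ Finset.range t, ∑ s : S, ∑ x : S, f k s x
          = ∑ k ∈ Finset.range t, ∑ x : S, ∑ s : S, f k s x :=
            Finset.sum_congr rfl fun k _ => Finset.sum_comm
        _ = ∑ x : S, ∑ k ∈ Finset.range t, ∑ s : S, f k s x := Finset.sum_comm
        _ = ∑ x : S, ∑ s : S, ∑ k ∈ Finset.range t, f k s x :=
            Finset.sum_congr rfl fun x _ => Finset.sum_comm
    rw [hI]
    simp only [Matrix.vecMul, dotProduct, Finset.sum_mul, Finset.mul_sum]
    rw [tri]
    refine Finset.sum_congr rfl fun x _ => Finset.sum_congr rfl fun s _ =>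
      Finset.sum_congr rfl fun k _ => by ring
  -- the limit value
  have hlimval : ∑ s, ι s * P.mulVec r s
      = ∑ s, ∑ s', (ι s * P s s') * r s' := by
    refine Finset.sum_congr rfl fun s _ => ?_
    rw [Matrix.mulVec, dotProduct, Finset.mul_sum]
    exact Finset.sum_congr rfl fun s' _ => by ring
  rw [hlimval]
  have hlim : Tendsto
      (fun t : ℕ => ∑ s, ∑ s', (ι s * ((t : ℝ)⁻¹ * ∑ k ∈ Finset.range t, (T ^ k) s s')) * r s')
      atTop (nhds (∑ s, ∑ s', (ι s * P s s') * r s')) := by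
    refine tendsto_finset_sum _ fun s _ => tendsto_finset_sum _ fun s' _ => ?_
    exact (((hP s s').const_mul (ι s)).mul_const (r s'))
  exact hlim.congr (fun t => (heq t).symm)
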